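/- Let a(x) = ∑ a_t x^t and b(x) = ∑ b_t x^t be formal power series over a commutative ring. With σ_k = (−1)^{s(k)}, T(n,k) = [k AND (n−k) = 0], the coefficient of x^m in a(x)·b(x) equals ∑_{k=0}^{m} σ_k ∑_{j=k}^{m} T(k+m−j, k)·T(j, k)·( ∑_{t=j−k}^{j} T(k, j−t)·σ_t·a_t )·( ∑_{t=j−k}^{j} T(k, j−t)·σ_t·b_t ). -/

import Mathlib

open Finset

namespace SierpConv

/-- binary digit sum -/
def s (n : ℕ) : ℕ := (Nat.digits 2 n).sum

lemma s_zero : s 0 = 0 := by simp [s]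

lemma s_def (n : ℕ) (hn : n ≠ 0) : s n = n % 2 + s (n / 2) := by
  unfold s
  rw [Nat.digits_def' (by norm_num) (Nat.pos_of_ne_zero hn)]
  simp

/-- submask notation helpers -/
lemma sub_iff_testBit {a b : ℕ} : a ||| b = b ↔ ∀ i, a.testBit i = true → b.testBit i = true := by
  constructor
  · intro h i hi
    have := congrArg (Nat.testBit · i) h
    simpa [Nat.testBit_lor, hi] using this
  · intro h
    apply Nat.eq_of_testBit_eq
    intro i
    rw [Nat.testBit_lor]
    rcases hb : a.testBit i with _ | _
    · simp
    · simp [h i hb]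

lemma sub_le {a b : ℕ} (h : a ||| b = b) : a ≤ b :=
  Nat.le_of_testBit (sub_iff_testBit.mp h)

lemma sub_trans {a b c : ℕ} (h1 : a ||| b = b) (h2 : b ||| c = c) : a ||| c = c := by
  rw [sub_iff_testBit] at *
  exact fun i hi => h2 i (h1 i hi)

lemma sub_lor_iff {a b c : ℕ} : (a ||| b) ||| c = c ↔ (a ||| c = c ∧ b ||| c = c) := by
  simp only [sub_iff_testBit, Nat.testBit_lor]
  constructor
  · intro h
    exact ⟨fun i hi => h i (by simp [hi]), fun i hi => h i (by simp [hi])⟩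
  · rintro ⟨h1, h2⟩ i hi
    rcases Bool.or_eq_true_iff.mp hi with h | h
    · exact h1 i h
    · exact h2 i h

/-- main disjointness lemma by induction -/
lemma disj_add_aux : ∀ n a b : ℕ, a + b ≤ n → a &&& b = 0 →
    a + b = a ||| b ∧ s (a + b) = s a + s b := by
  intro n
  induction n with
  | zero =>
    intro a b hab _
    have ha : a = 0 := by omega
    have hb : b = 0 := by omega
    subst ha; subst hb
    simp [s_zero]
  | succ n ih =>
    intro a b hab h
    rcases Nat.eq_zero_or_pos a with rfl | ha
    · simp [s_zero]
    rcases Nat.eq_zero_or_pos b with rfl | hb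
    · simp [s_zero]
    -- bit 0 facts
    have h0 : (a.testBit 0 && b.testBit 0) = false := by
      have := congrArg (fun x => Nat.testBit x 0) h
      simpa [Nat.testBit_land] using this
    have hor : a % 2 = 0 ∨ b % 2 = 0 := by
      simp only [Nat.testBit_zero, Bool.and_eq_false_iff, decide_eq_false_iff_not] at h0
      rcases h0 with h0 | h0
      · left; omega
      · right; omega
    have hdiv : a / 2 &&& b / 2 = 0 := by
      rw [← Nat.and_div_two, h]
    have hle : a / 2 + b / 2 ≤ n := by omega
    obtain ⟨ih1, ih2⟩ := ih (a / 2) (b / 2) hle hdiv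
    -- lor bit-0
    have hbit := Nat.testBit_lor a b 0
    rw [Nat.testBit_zero, Nat.testBit_zero, Nat.testBit_zero] at hbit
    have hiff : ((a ||| b) % 2 = 1) ↔ (a % 2 = 1 ∨ b % 2 = 1) := by
      constructor
      · intro hx
        have hx2 : (decide (a % 2 = 1) || decide (b % 2 = 1)) = true := by
          rw [← hbit]; simpa using hx
        simpa using hx2
      · intro hx
        have hx2 : decide ((a ||| b) % 2 = 1) = true := by
          rw [hbit]; simpa using hx
        simpa using hx2
    have hor0 : (a ||| b) % 2 = a % 2 + b % 2 := by omega
    have hordiv : (a ||| b) / 2 = a / 2 ||| b / 2 := Nat.or_div_two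
    have hadd : a + b = a ||| b := by
      have e1 : a ||| b = 2 * (a / 2 ||| b / 2) + (a % 2 + b % 2) := by
        rw [← hordiv, ← hor0]; omega
      rw [e1, ← ih1]
      rcases hor with h1 | h1 <;> omega
    refine ⟨hadd, ?_⟩
    have hd2 : (a + b) / 2 = a / 2 + b / 2 := by
      rcases hor with h1 | h1 <;> omega
    have hm2' : (a + b) % 2 = a % 2 + b % 2 := by
      rcases hor with h1 | h1 <;> omega
    rw [s_def _ (by omega : a + b ≠ 0), s_def a (by omega), s_def b (by omega)]
    rw [hd2, hm2', ih2]
    ring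

lemma disj_add {a b : ℕ} (h : a &&& b = 0) : a + b = a ||| b :=
  (disj_add_aux (a + b) a b le_rfl h).1

lemma s_disj {a b : ℕ} (h : a &&& b = 0) : s (a ||| b) = s a + s b := by
  rw [← disj_add h]; exact (disj_add_aux (a + b) a b le_rfl h).2



lemma land_bits {a b : ℕ} (h : a &&& b = 0) :
    ∀ i, (a.testBit i && b.testBit i) = false := fun i => by
  have := congrArg (Nat.testBit · i) h
  simpa [Nat.testBit_land] using this

lemma xor_disj {a b : ℕ} (h : a &&& b = 0) : a ^^^ b = a ||| b := by
  apply Nat.eq_of_testBit_eq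
  intro i
  have hi := land_bits h i
  rw [Nat.testBit_xor, Nat.testBit_lor]
  rcases ha : a.testBit i <;> rcases hb : b.testBit i <;> simp [ha, hb] at hi ⊢

section Ring
variable {R : Type*} [CommRing R]

/-- the sign (-1)^(binary digit sum) -/
def sgn (R : Type*) [CommRing R] (n : ℕ) : R := (-1) ^ (s n)

lemma sgn_mul_self (n : ℕ) : sgn R n * sgn R n = 1 := by
  rw [sgn, ← pow_add]
  exact Even.neg_one_pow ⟨s n, rfl⟩

lemma sgn_disj {a b : ℕ} (h : a &&& b = 0) : sgn R (a ||| b) = sgn R a * sgn R b := by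
  rw [sgn, sgn, sgn, s_disj h, pow_add]

lemma s_two_pow (i : ℕ) : s (2 ^ i) = 1 := by
  induction i with
  | zero => simp [s]
  | succ n ih =>
    rw [s_def _ (by positivity)]
    have h1 : 2 ^ (n + 1) % 2 = 0 := by
      simp [Nat.pow_succ, Nat.mul_mod_left]
    have h2 : 2 ^ (n + 1) / 2 = 2 ^ n := by
      rw [Nat.pow_succ]; omega
    rw [h1, h2, ih]

lemma sgn_two_pow (i : ℕ) : sgn R (2 ^ i) = -1 := by
  rw [sgn, s_two_pow, pow_one]

lemma sgn_xor_two_pow_of_false {k i : ℕ} (h : k.testBit i = false) :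
    sgn R (k ^^^ 2 ^ i) = - sgn R k := by
  have hd : k &&& 2 ^ i = 0 := by
    rw [Nat.and_two_pow, h]; simp
  rw [xor_disj hd, sgn_disj hd, sgn_two_pow]
  ring

lemma sgn_xor_two_pow (k i : ℕ) : sgn R (k ^^^ 2 ^ i) = - sgn R k := by
  rcases hk : k.testBit i with _ | _
  · exact sgn_xor_two_pow_of_false hk
  · have hk' : (k ^^^ 2 ^ i).testBit i = false := by
      simp [Nat.testBit_xor, hk, Nat.testBit_two_pow_self]
    have h2 := sgn_xor_two_pow_of_false (R := R) hk'
    rw [Nat.xor_xor_cancel_right] at h2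
    rw [h2, neg_neg]

end Ring

lemma sub_decomp {a b : ℕ} (h : b ||| a = a) :
    b &&& (a ^^^ b) = 0 ∧ b ||| (a ^^^ b) = a := by
  have hb := sub_iff_testBit.mp h
  constructor
  · apply Nat.eq_of_testBit_eq
    intro i
    rw [Nat.testBit_land, Nat.testBit_xor, Nat.zero_testBit]
    rcases hib : b.testBit i with _ | _
    · simp
    · simp [hb i hib]
  · apply Nat.eq_of_testBit_eq
    intro i
    rw [Nat.testBit_lor, Nat.testBit_xor]
    rcases hib : b.testBit i with _ | _
    · simp
    · simp [hb i hib]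

lemma sub_add_xor {a b : ℕ} (h : b ||| a = a) : b + (a ^^^ b) = a := by
  rw [disj_add (sub_decomp h).1, (sub_decomp h).2]

lemma sub_sub_xor {a b : ℕ} (h : b ||| a = a) : a - b = a ^^^ b := by
  have := sub_add_xor h
  omega

lemma sgn_xor_sub {R : Type*} [CommRing R] {a b : ℕ} (h : b ||| a = a) :
    sgn R (a ^^^ b) = sgn R a * sgn R b := by
  have h1 : sgn R a = sgn R b * sgn R (a ^^^ b) := by
    rw [← sgn_disj (sub_decomp h).1, (sub_decomp h).2]
  calc sgn R (a ^^^ b) = (sgn R b * sgn R b) * sgn R (a ^^^ b) := by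
        rw [sgn_mul_self, one_mul]
    _ = sgn R a * sgn R b := by rw [mul_assoc, ← h1]; ring

lemma land_sub_eq_zero_iff {k j : ℕ} (h : k ≤ j) :
    k &&& (j - k) = 0 ↔ k ||| j = j := by
  constructor
  · intro hd
    have h1 : k ||| (j - k) = j := by
      rw [← disj_add hd]; omega
    calc k ||| j = (k ||| k) ||| (j - k) := by rw [Nat.lor_assoc, h1]
      _ = j := by rw [Nat.or_self, h1]
  · intro hs
    rw [sub_sub_xor hs]
    exact (sub_decomp hs).1



lemma moebius {R : Type*} [CommRing R] (N L u : ℕ) (hu : u < N) :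
    (∑ k ∈ (Finset.range N).filter (fun k => L ||| k = k ∧ k ||| u = u), sgn R k)
      = if L = u then sgn R u else 0 := by
  by_cases hLu : L ||| u = u
  · by_cases hL : L = u
    · rw [if_pos hL]
      have hset : (Finset.range N).filter (fun k => L ||| k = k ∧ k ||| u = u) = {u} := by
        ext k
        simp only [Finset.mem_filter, Finset.mem_range, Finset.mem_singleton]
        constructor
        · rintro ⟨_, h1, h2⟩
          have hk1 := sub_le h1
          have hk2 := sub_le h2
          omega
        · rintro rfl
          exact ⟨hu, by simp [hL], Nat.or_self _⟩
      rw [hset, Finset.sum_singleton]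
    · rw [if_neg hL]
      have hex : ∃ i, u.testBit i = true ∧ L.testBit i = false := by
        by_contra hall
        push_neg at hall
        apply hL
        apply Nat.le_antisymm (sub_le hLu)
        apply Nat.le_of_testBit
        intro i hi
        have := hall i hi
        simpa using this
      obtain ⟨i, hui, hLi⟩ := hex
      refine Finset.sum_involution (fun k _ => k ^^^ 2 ^ i) ?_ ?_ ?_ ?_
      · intro k _
        rw [sgn_xor_two_pow]; ring
      · intro k _ _ heq
        have h0 : k ^^^ 2 ^ i = k ^^^ 0 := by simpa using heq
        have h1 := Nat.xor_right_inj.mp h0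
        exact absurd h1 (by positivity)
      · intro k hk
        simp only [Finset.mem_filter, Finset.mem_range] at hk ⊢
        obtain ⟨hkN, h1, h2⟩ := hk
        have h1b := sub_iff_testBit.mp h1
        have h2b := sub_iff_testBit.mp h2
        have h2' : (k ^^^ 2 ^ i) ||| u = u := by
          rw [sub_iff_testBit]; intro n hn
          rw [Nat.testBit_xor, Nat.testBit_two_pow] at hn
          by_cases hni : i = n
          · subst hni; exact hui
          · simp only [hni, decide_false, Bool.xor_false] at hn
            exact h2b n hn
        refine ⟨?_, ?_, h2'⟩
        · have := sub_le h2'; omega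
        · rw [sub_iff_testBit]; intro n hn
          rw [Nat.testBit_xor, Nat.testBit_two_pow]
          have hkn := h1b n hn
          have hne : i ≠ n := by
            rintro rfl
            rw [hn] at hLi
            exact absurd hLi (by simp)
          simp [hne, hkn]
      · intro k _
        exact Nat.xor_xor_cancel_right _ _
  · have hset : (Finset.range N).filter (fun k => L ||| k = k ∧ k ||| u = u) = ∅ := by
      apply Finset.filter_false_of_mem
      rintro k - ⟨h1, h2⟩
      exact hLu (sub_trans h1 h2)
    rw [hset, Finset.sum_empty, if_neg]
    rintro rfl
    exact hLu (Nat.or_self L)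



lemma land_eq_zero_iff {a b : ℕ} :
    a &&& b = 0 ↔ ∀ i, (a.testBit i && b.testBit i) = false := by
  constructor
  · exact land_bits
  · intro h
    apply Nat.eq_of_testBit_eq
    intro i
    rw [Nat.testBit_land, h i, Nat.zero_testBit]

lemma sub_lor_right (a b : ℕ) : b ||| (a ||| b) = a ||| b := by
  rw [Nat.lor_comm a b, ← Nat.lor_assoc, Nat.or_self]

lemma sub_lor_left (a b : ℕ) : a ||| (a ||| b) = a ||| b := by
  rw [← Nat.lor_assoc, Nat.or_self]

lemma land_sub_right (a b : ℕ) : (a &&& b) ||| b = b := by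
  rw [sub_iff_testBit]
  intro i hi
  rw [Nat.testBit_land] at hi
  exact (Bool.and_eq_true_iff.mp hi).2

lemma land_sub_left (a b : ℕ) : (a &&& b) ||| a = a := by
  rw [Nat.land_comm]; exact land_sub_right b a

lemma sub_land_zero {a b c : ℕ} (h : a ||| b = b) (h2 : b &&& c = 0) : a &&& c = 0 := by
  rw [land_eq_zero_iff] at h2 ⊢
  intro i
  have hs := sub_iff_testBit.mp h i
  have h2i := h2 i
  rcases ha : a.testBit i with _ | _
  · simp
  · simp [hs ha] at h2i ⊢
    simpa using h2i

lemma sub_land {d w : ℕ} (h : d ||| w = w) : w &&& d = d := by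
  apply Nat.eq_of_testBit_eq
  intro i
  rw [Nat.testBit_land]
  have hs := sub_iff_testBit.mp h i
  rcases hd : d.testBit i with _ | _
  · simp
  · simp [hs hd]

lemma xor_sub_of_sub {x j : ℕ} (h : x ||| j = j) : (j ^^^ x) ||| j = j := by
  rw [sub_iff_testBit]
  intro i hi
  rw [Nat.testBit_xor] at hi
  rcases hj : j.testBit i with _ | _
  · rcases hx : x.testBit i with _ | _
    · simp [hj, hx] at hi
    · simp [sub_iff_testBit.mp h i hx] at hj
  · rfl

/-- the key bit computation: for p,q submasks of j,
    (j ^^^ p) ||| (j ^^^ q) = j ^^^ (p &&& q) -/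
lemma lor_xor_xor {p q j : ℕ} (hp : p ||| j = j) (hq : q ||| j = j) :
    (j ^^^ p) ||| (j ^^^ q) = j ^^^ (p &&& q) := by
  apply Nat.eq_of_testBit_eq
  intro i
  have hpi := sub_iff_testBit.mp hp i
  have hqi := sub_iff_testBit.mp hq i
  rw [Nat.testBit_lor, Nat.testBit_xor, Nat.testBit_xor, Nat.testBit_xor, Nat.testBit_land]
  rcases hpb : p.testBit i with _ | _ <;> rcases hqb : q.testBit i with _ | _ <;>
    simp_all

/-- u := j ^^^ (j &&& c) : bits of j not in c.  Submask characterization. -/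
lemma sub_u_iff {k j c : ℕ} :
    (k ||| j = j ∧ k &&& c = 0) ↔ k ||| (j ^^^ (j &&& c)) = j ^^^ (j &&& c) := by
  have hu : ∀ i, (j ^^^ (j &&& c)).testBit i = (j.testBit i && ! c.testBit i) := by
    intro i
    rw [Nat.testBit_xor, Nat.testBit_land]
    rcases j.testBit i <;> rcases c.testBit i <;> rfl
  constructor
  · rintro ⟨h1, h2⟩
    rw [sub_iff_testBit]
    intro i hi
    rw [hu i]
    have := sub_iff_testBit.mp h1 i hi
    have h2i := land_bits h2 i
    rw [hi] at h2i
    simp_all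
  · intro h
    have hb := sub_iff_testBit.mp h
    constructor
    · rw [sub_iff_testBit]
      intro i hi
      have := hb i hi
      rw [hu i] at this
      exact (Bool.and_eq_true_iff.mp this).1
    · rw [land_eq_zero_iff]
      intro i
      rcases hk : k.testBit i with _ | _
      · simp
      · have := hb i hk
        rw [hu i] at this
        simp_all

lemma u_sub_j (j c : ℕ) : (j ^^^ (j &&& c)) ||| j = j :=
  xor_sub_of_sub (land_sub_left j c)

/-- Lemma E : characterization of L = u -/
lemma cond_iff {p q j m : ℕ} (hp : p ≤ j) (hq : q ≤ j) :
    ((j - p) ||| (j - q)) = j ^^^ (j &&& (m - j)) ↔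
      (p ||| j = j ∧ q ||| j = j ∧ j &&& (m - j) = p &&& q) := by
  constructor
  · intro h
    have hLj : ((j - p) ||| (j - q)) ||| j = j := by
      rw [h]; exact u_sub_j j (m - j)
    have hpj : (j - p) ||| j = j := (sub_lor_iff.mp hLj).1
    have hqj : (j - q) ||| j = j := (sub_lor_iff.mp hLj).2
    have hp' : p ||| j = j := by
      have h1 : j - (j - p) = j ^^^ (j - p) := sub_sub_xor hpj
      have h2 : j - (j - p) = p := by omega
      rw [← h2, h1]
      exact xor_sub_of_sub hpj
    have hq' : q ||| j = j := by
      have h1 : j - (j - q) = j ^^^ (j - q) := sub_sub_xor hqj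
      have h2 : j - (j - q) = q := by omega
      rw [← h2, h1]
      exact xor_sub_of_sub hqj
    refine ⟨hp', hq', ?_⟩
    rw [sub_sub_xor hp', sub_sub_xor hq', lor_xor_xor hp' hq'] at h
    have := Nat.xor_right_inj.mp h
    omega
  · rintro ⟨hp', hq', heq⟩
    rw [sub_sub_xor hp', sub_sub_xor hq', lor_xor_xor hp' hq', heq]



lemma disj_of_land {j c d : ℕ} (h : j &&& c = d) : (j ^^^ d) &&& (c ^^^ d) = 0 := by
  rw [land_eq_zero_iff]
  intro i
  have hbit := congrArg (Nat.testBit · i) h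
  simp only [Nat.testBit_land] at hbit
  rw [Nat.testBit_xor, Nat.testBit_xor]
  rcases hj : j.testBit i with _ | _ <;> rcases hc : c.testBit i with _ | _ <;>
    simp_all

lemma land_mix {x y d : ℕ} (hxy : x &&& y = 0) (hxd : x &&& d = 0) (hyd : y &&& d = 0) :
    (x ||| d) &&& (d ||| y) = d := by
  apply Nat.eq_of_testBit_eq
  intro i
  have h1 := land_bits hxy i
  have h2 := land_bits hxd i
  have h3 := land_bits hyd i
  rw [Nat.testBit_land, Nat.testBit_lor, Nat.testBit_lor]
  rcases hx : x.testBit i <;> rcases hy : y.testBit i <;> rcases hd : d.testBit i <;> simp_all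

/-- Lemma F : the j-summation -/
lemma lemF {R : Type*} [CommRing R] (m w d : ℕ) (hdw : d ||| w = w) :
    (∑ j ∈ (Finset.range (m + 1)).filter (fun j => w ||| j = j ∧ j &&& (m - j) = d), sgn R j)
      = if w + d = m then sgn R w else 0 := by
  set S := (Finset.range (m + 1)).filter (fun j => w ||| j = j ∧ j &&& (m - j) = d) with hS
  rcases S.eq_empty_or_nonempty with hE | ⟨j₀, hj₀⟩
  · rw [hE, Finset.sum_empty, if_neg]
    intro hm
    have hwS : w ∈ S := by
      rw [hS, Finset.mem_filter, Finset.mem_range]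
      refine ⟨by omega, Nat.or_self w, ?_⟩
      have : m - w = d := by omega
      rw [this]
      exact sub_land hdw
    rw [hE] at hwS
    simp at hwS
  · -- nonempty case
    rw [hS, Finset.mem_filter, Finset.mem_range] at hj₀
    obtain ⟨hj₀m, hwj₀, hc₀⟩ := hj₀
    have hj₀m' : j₀ ≤ m := by omega
    have hdj₀ : d ||| j₀ = j₀ := sub_trans hdw hwj₀
    have hdc₀ : d ||| (m - j₀) = m - j₀ := by rw [← hc₀]; exact land_sub_right _ _
    have hdlej : d ≤ j₀ := sub_le hdj₀
    have hdlec : d ≤ m - j₀ := sub_le hdc₀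
    have h2d : 2 * d ≤ m := by omega
    set e := m - 2 * d with he
    -- x₀, y₀ facts
    have hx₀ : d + (j₀ ^^^ d) = j₀ := sub_add_xor hdj₀
    have hy₀ : d + ((m - j₀) ^^^ d) = m - j₀ := sub_add_xor hdc₀
    have hxy₀ : (j₀ ^^^ d) &&& ((m - j₀) ^^^ d) = 0 := disj_of_land hc₀
    have hexy : e = (j₀ ^^^ d) ||| ((m - j₀) ^^^ d) := by
      rw [← disj_add hxy₀]; omega
    have hxd₀ : (j₀ ^^^ d) &&& d = 0 := by
      rw [Nat.land_comm]; exact (sub_decomp hdj₀).1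
    have hyd₀ : ((m - j₀) ^^^ d) &&& d = 0 := by
      rw [Nat.land_comm]; exact (sub_decomp hdc₀).1
    have hed : e &&& d = 0 := by
      rw [hexy, land_eq_zero_iff]
      intro i
      have h1 := land_bits hxd₀ i
      have h2 := land_bits hyd₀ i
      rw [Nat.testBit_lor]
      rcases hii : (j₀ ^^^ d).testBit i <;> rcases hjj : ((m - j₀) ^^^ d).testBit i <;> simp_all
    have hem : e ≤ m := by omega
    -- the bijection
    have hbij : (∑ j ∈ S, sgn R j) =
        ∑ x ∈ (Finset.range (m + 1)).filter
          (fun x => (w ^^^ d) ||| x = x ∧ x ||| e = e), sgn R d * sgn R x := by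
      apply Finset.sum_nbij' (fun j => j ^^^ d) (fun x => x ^^^ d)
      · -- forward membership
        intro j hj
        rw [hS, Finset.mem_filter, Finset.mem_range] at hj
        obtain ⟨hjm, hwj, hc⟩ := hj
        have hjm' : j ≤ m := by omega
        have hdj : d ||| j = j := sub_trans hdw hwj
        have hdcj : d ||| (m - j) = m - j := by rw [← hc]; exact land_sub_right _ _
        have hx : d + (j ^^^ d) = j := sub_add_xor hdj
        have hy : d + ((m - j) ^^^ d) = m - j := sub_add_xor hdcj
        have hxy : (j ^^^ d) &&& ((m - j) ^^^ d) = 0 := disj_of_land hc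
        have hsum : (j ^^^ d) + ((m - j) ^^^ d) = e := by omega
        have hxe : (j ^^^ d) ||| e = e := by
          rw [← hsum, disj_add hxy, sub_lor_left]
        rw [Finset.mem_filter, Finset.mem_range]
        refine ⟨?_, ?_, hxe⟩
        · have := sub_le hxe; omega
        · -- (w ^^^ d) ⊆ (j ^^^ d)
          rw [sub_iff_testBit]
          intro i hi
          rw [Nat.testBit_xor] at hi ⊢
          have hwi := sub_iff_testBit.mp hwj i
          have hdi := sub_iff_testBit.mp hdw i
          rcases hw1 : w.testBit i with _ | _ <;> rcases hd1 : d.testBit i with _ | _ <;>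
            simp_all
      · -- backward membership
        intro x hx
        rw [Finset.mem_filter, Finset.mem_range] at hx
        obtain ⟨hxm, hwdx, hxe⟩ := hx
        have hxd : x &&& d = 0 := sub_land_zero hxe hed
        have hxor : x ^^^ d = x ||| d := xor_disj hxd
        have hadd : x ^^^ d = x + d := by rw [hxor, ← disj_add hxd]
        have hxle : x ≤ e := sub_le hxe
        have hy' : x &&& (e ^^^ x) = 0 := (sub_decomp hxe).1
        have hy'e : x ||| (e ^^^ x) = e := (sub_decomp hxe).2
        have hy'd : (e ^^^ x) &&& d = 0 := sub_land_zero (xor_sub_of_sub hxe) hed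
        have hy'x : (e ^^^ x) &&& x = 0 := by rw [Nat.land_comm]; exact hy'
        rw [hS, Finset.mem_filter, Finset.mem_range]
        refine ⟨by omega, ?_, ?_⟩
        · -- w ⊆ x ^^^ d
          have hw2 : d ||| (w ^^^ d) = w := (sub_decomp hdw).2
          rw [← hw2, hxor, sub_lor_iff]
          constructor
          · rw [Nat.lor_comm x d]; exact sub_lor_left _ _
          · exact sub_trans hwdx (sub_lor_left _ _)
        · -- (x ^^^ d) &&& (m - (x ^^^ d)) = d
          have hsub : m - (x ^^^ d) = d + (e ^^^ x) := by
            have h1 : x + (e ^^^ x) = e := sub_add_xor hxe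
            omega
          have hdy : d &&& (e ^^^ x) = 0 := by rw [Nat.land_comm]; exact hy'd
          rw [hsub, disj_add hdy, hxor]
          exact land_mix hy' hxd hy'd
      · intro j _; exact Nat.xor_xor_cancel_right _ _
      · intro x _; exact Nat.xor_xor_cancel_right _ _
      · intro j hj
        rw [hS, Finset.mem_filter, Finset.mem_range] at hj
        obtain ⟨hjm, hwj, hc⟩ := hj
        have hdj : d ||| j = j := sub_trans hdw hwj
        calc sgn R j = sgn R (d ||| (j ^^^ d)) := by rw [(sub_decomp hdj).2]
          _ = sgn R d * sgn R (j ^^^ d) := sgn_disj (sub_decomp hdj).1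
    rw [hbij, ← Finset.mul_sum, moebius (m + 1) (w ^^^ d) e (by omega)]
    by_cases hcase : w ^^^ d = e
    · have hw : d + (w ^^^ d) = w := sub_add_xor hdw
      rw [if_pos hcase, if_pos (by omega)]
      rw [← hcase, sgn_xor_sub hdw]
      calc sgn R d * (sgn R w * sgn R d) = sgn R w * (sgn R d * sgn R d) := by ring
        _ = sgn R w := by rw [sgn_mul_self, mul_one]
    · rw [if_neg hcase, if_neg, mul_zero]
      intro hm
      apply hcase
      have h1 : w - d = w ^^^ d := sub_sub_xor hdw
      have h2 : d ≤ w := sub_le hdw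
      omega



section Key
variable {R : Type*} [CommRing R]

/-- the inner sum over k, for fixed j -/
lemma key_inner (m p q j : ℕ) (hj : j ≤ m) :
    (∑ k ∈ Finset.range (m + 1), if k ≤ j then
      sgn R k * (if k &&& (k + m - j - k) = 0 then (1 : R) else 0) *
        (if k &&& (j - k) = 0 then (1 : R) else 0) *
        (if p ∈ Finset.Icc (j - k) j then
          (if (j - p) &&& (k - (j - p)) = 0 then (1 : R) else 0) * sgn R p else 0) *
        (if q ∈ Finset.Icc (j - k) j then
          (if (j - q) &&& (k - (j - q)) = 0 then (1 : R) else 0) * sgn R q else 0)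
      else 0)
    = if p ≤ j ∧ q ≤ j then
        (if (j - p) ||| (j - q) = j ^^^ (j &&& (m - j)) then sgn R (j ^^^ (j &&& (m - j))) else 0)
          * (sgn R p * sgn R q)
      else 0 := by
  by_cases hpq : p ≤ j ∧ q ≤ j
  · obtain ⟨hpj, hqj⟩ := hpq
    rw [if_pos ⟨hpj, hqj⟩]
    have hterm : ∀ k ∈ Finset.range (m + 1), (if k ≤ j then
        sgn R k * (if k &&& (k + m - j - k) = 0 then (1 : R) else 0) *
          (if k &&& (j - k) = 0 then (1 : R) else 0) *
          (if p ∈ Finset.Icc (j - k) j then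
            (if (j - p) &&& (k - (j - p)) = 0 then (1 : R) else 0) * sgn R p else 0) *
          (if q ∈ Finset.Icc (j - k) j then
            (if (j - q) &&& (k - (j - q)) = 0 then (1 : R) else 0) * sgn R q else 0)
        else 0)
        = (if ((j - p) ||| (j - q)) ||| k = k ∧
              k ||| (j ^^^ (j &&& (m - j))) = j ^^^ (j &&& (m - j)) then sgn R k else 0)
            * (sgn R p * sgn R q) := by
      intro k _
      by_cases hkj : k ≤ j
      · rw [if_pos hkj]
        have e1 : k + m - j - k = m - j := by omega
        rw [e1]
        by_cases hcond : ((j - p) ||| (j - q)) ||| k = k ∧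
            k ||| (j ^^^ (j &&& (m - j))) = j ^^^ (j &&& (m - j))
        · obtain ⟨hD1, hD2⟩ := hcond
          obtain ⟨hkju, hkmj⟩ := sub_u_iff.mpr hD2
          have hC2 : k &&& (j - k) = 0 := (land_sub_eq_zero_iff hkj).mpr hkju
          have hpk : (j - p) ||| k = k := (sub_lor_iff.mp hD1).1
          have hqk : (j - q) ||| k = k := (sub_lor_iff.mp hD1).2
          have hpk' : j - p ≤ k := sub_le hpk
          have hqk' : j - q ≤ k := sub_le hqk
          have hC3 : p ∈ Finset.Icc (j - k) j := by
            rw [Finset.mem_Icc]; omega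
          have hC4 : q ∈ Finset.Icc (j - k) j := by
            rw [Finset.mem_Icc]; omega
          have hC3' : (j - p) &&& (k - (j - p)) = 0 := (land_sub_eq_zero_iff hpk').mpr hpk
          have hC4' : (j - q) &&& (k - (j - q)) = 0 := (land_sub_eq_zero_iff hqk').mpr hqk
          rw [if_pos (And.intro hD1 hD2), if_pos hkmj, if_pos hC2, if_pos hC3, if_pos hC3',
            if_pos hC4, if_pos hC4']
          ring
        · rw [if_neg hcond]
          by_cases h1 : k &&& (m - j) = 0
          swap
          · rw [if_neg h1]; ring
          by_cases h2 : k &&& (j - k) = 0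
          swap
          · rw [if_neg h2]; ring
          by_cases h3 : p ∈ Finset.Icc (j - k) j
          swap
          · rw [if_neg h3]; ring
          by_cases h4 : q ∈ Finset.Icc (j - k) j
          swap
          · rw [if_neg h4]; ring
          by_cases h3' : (j - p) &&& (k - (j - p)) = 0
          swap
          · rw [if_pos h3, if_neg h3']; ring
          by_cases h4' : (j - q) &&& (k - (j - q)) = 0
          swap
          · rw [if_pos h4, if_neg h4']; ring
          exfalso
          apply hcond
          rw [Finset.mem_Icc] at h3 h4
          have hpk' : j - p ≤ k := by omega
          have hqk' : j - q ≤ k := by omega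
          have hD1 : ((j - p) ||| (j - q)) ||| k = k :=
            sub_lor_iff.mpr ⟨(land_sub_eq_zero_iff hpk').mp h3',
              (land_sub_eq_zero_iff hqk').mp h4'⟩
          have hD2 : k ||| (j ^^^ (j &&& (m - j))) = j ^^^ (j &&& (m - j)) :=
            sub_u_iff.mp ⟨(land_sub_eq_zero_iff hkj).mp h2, h1⟩
          exact ⟨hD1, hD2⟩
      · rw [if_neg hkj, if_neg, zero_mul]
        rintro ⟨_, hD2⟩
        exact hkj (le_trans (sub_le hD2) (sub_le (u_sub_j j (m - j))))
    rw [Finset.sum_congr rfl hterm, ← Finset.sum_mul]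
    congr 1
    rw [← Finset.sum_filter]
    exact moebius (m + 1) ((j - p) ||| (j - q)) (j ^^^ (j &&& (m - j)))
      (by have := sub_le (u_sub_j j (m - j)); omega)
  · rw [if_neg hpq]
    apply Finset.sum_eq_zero
    intro k _
    rcases not_and_or.mp hpq with h | h
    · by_cases hkj : k ≤ j
      · rw [if_pos hkj, if_neg (by rw [Finset.mem_Icc]; omega :
          ¬ p ∈ Finset.Icc (j - k) j)]
        ring
      · rw [if_neg hkj]
    · by_cases hkj : k ≤ j
      · rw [if_pos hkj, if_neg (by rw [Finset.mem_Icc]; omega :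
          ¬ q ∈ Finset.Icc (j - k) j)]
        ring
      · rw [if_neg hkj]



lemma lor_xor_land (p q : ℕ) :
    (p ^^^ (p &&& q)) ||| (q ^^^ (p &&& q)) = (p ||| q) ^^^ (p &&& q) := by
  apply Nat.eq_of_testBit_eq
  intro i
  simp only [Nat.testBit_lor, Nat.testBit_xor, Nat.testBit_land]
  cases hp : p.testBit i <;> cases hq : q.testBit i <;> simp [hp, hq]

lemma add_eq_lor_add_land (p q : ℕ) : p + q = (p ||| q) + (p &&& q) := by
  have hdp : (p &&& q) ||| p = p := land_sub_left p q
  have hdq : (p &&& q) ||| q = q := land_sub_right p q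
  have hdw : (p &&& q) ||| (p ||| q) = p ||| q :=
    sub_trans hdp (sub_lor_left p q)
  have e1 : (p &&& q) + (p ^^^ (p &&& q)) = p := sub_add_xor hdp
  have e2 : (p &&& q) + (q ^^^ (p &&& q)) = q := sub_add_xor hdq
  have e3 : (p &&& q) + ((p ||| q) ^^^ (p &&& q)) = p ||| q := sub_add_xor hdw
  have hdisj : (p ^^^ (p &&& q)) &&& (q ^^^ (p &&& q)) = 0 := disj_of_land rfl
  have e4 : (p ^^^ (p &&& q)) + (q ^^^ (p &&& q)) = (p ||| q) ^^^ (p &&& q) := by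
    rw [disj_add hdisj, lor_xor_land]
  omega

/-- step C : the j-th term -/
lemma key_j {p q j m : ℕ} (_ : j ≤ m) :
    (if p ≤ j ∧ q ≤ j then
        (if (j - p) ||| (j - q) = j ^^^ (j &&& (m - j)) then sgn R (j ^^^ (j &&& (m - j))) else 0)
          * (sgn R p * sgn R q)
      else 0)
    = if (p ||| q) ||| j = j ∧ j &&& (m - j) = p &&& q then
        sgn R j * sgn R (p &&& q) * (sgn R p * sgn R q) else 0 := by
  by_cases hpq : p ≤ j ∧ q ≤ j
  · obtain ⟨hpj, hqj⟩ := hpq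
    rw [if_pos (And.intro hpj hqj)]
    by_cases hL : (j - p) ||| (j - q) = j ^^^ (j &&& (m - j))
    · obtain ⟨hp', hq', heq⟩ := (cond_iff hpj hqj).mp hL
      rw [if_pos hL, if_pos (And.intro (sub_lor_iff.mpr ⟨hp', hq'⟩) heq)]
      have hdj : (p &&& q) ||| j = j := sub_trans (land_sub_left p q) hp'
      have : sgn R (j ^^^ (j &&& (m - j))) = sgn R j * sgn R (p &&& q) := by
        rw [heq]
        exact sgn_xor_sub hdj
      rw [this]
    · have hnc : ¬((p ||| q) ||| j = j ∧ j &&& (m - j) = p &&& q) := by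
        rintro ⟨hw, heq⟩
        obtain ⟨hp', hq'⟩ := sub_lor_iff.mp hw
        exact hL ((cond_iff hpj hqj).mpr ⟨hp', hq', heq⟩)
      rw [if_neg hL, if_neg hnc, zero_mul]
  · rw [if_neg hpq, if_neg]
    rintro ⟨hw, _⟩
    obtain ⟨hp', hq'⟩ := sub_lor_iff.mp hw
    exact hpq ⟨le_trans (sub_le (sub_lor_left p q)) (sub_le hw),
      le_trans (sub_le (sub_lor_right p q)) (sub_le hw)⟩

/-- the main scalar identity -/
lemma key (m p q : ℕ) :
    (∑ k ∈ Finset.range (m + 1), ∑ j ∈ Finset.Icc k m,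
      sgn R k * (if k &&& (k + m - j - k) = 0 then (1 : R) else 0) *
        (if k &&& (j - k) = 0 then (1 : R) else 0) *
        (if p ∈ Finset.Icc (j - k) j then
          (if (j - p) &&& (k - (j - p)) = 0 then (1 : R) else 0) * sgn R p else 0) *
        (if q ∈ Finset.Icc (j - k) j then
          (if (j - q) &&& (k - (j - q)) = 0 then (1 : R) else 0) * sgn R q else 0))
    = if p + q = m then 1 else 0 := by
  -- swap order of summation
  have hswap : ∀ (f : ℕ → ℕ → R),
      (∑ k ∈ Finset.range (m + 1), ∑ j ∈ Finset.Icc k m, f k j)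
        = ∑ j ∈ Finset.range (m + 1), ∑ k ∈ Finset.range (m + 1),
            if k ≤ j then f k j else 0 := by
    intro f
    rw [Finset.sum_comm]
    apply Finset.sum_congr rfl
    intro k hk
    rw [Finset.mem_range] at hk
    have hsub : Finset.Icc k m ⊆ Finset.range (m + 1) := by
      intro x hx
      rw [Finset.mem_Icc] at hx
      rw [Finset.mem_range]
      omega
    rw [← Finset.inter_eq_right.mpr hsub, ← Finset.sum_ite_mem]
    apply Finset.sum_congr rfl
    intro j hj
    rw [Finset.mem_range] at hj
    simp only [Finset.mem_Icc]
    by_cases hkj : k ≤ j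
    · rw [if_pos (And.intro hkj (by omega : j ≤ m)), if_pos hkj]
    · rw [if_neg (fun h => hkj h.1), if_neg hkj]
  rw [hswap]
  have hj' : ∀ j ∈ Finset.range (m + 1), (∑ k ∈ Finset.range (m + 1),
      if k ≤ j then
        sgn R k * (if k &&& (k + m - j - k) = 0 then (1 : R) else 0) *
          (if k &&& (j - k) = 0 then (1 : R) else 0) *
          (if p ∈ Finset.Icc (j - k) j then
            (if (j - p) &&& (k - (j - p)) = 0 then (1 : R) else 0) * sgn R p else 0) *
          (if q ∈ Finset.Icc (j - k) j then
            (if (j - q) &&& (k - (j - q)) = 0 then (1 : R) else 0) * sgn R q else 0)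
      else 0)
      = (if (p ||| q) ||| j = j ∧ j &&& (m - j) = p &&& q then sgn R j else 0)
          * (sgn R (p &&& q) * (sgn R p * sgn R q)) := by
    intro j hj
    rw [Finset.mem_range] at hj
    rw [key_inner m p q j (by omega), key_j (by omega : j ≤ m)]
    by_cases hc : (p ||| q) ||| j = j ∧ j &&& (m - j) = p &&& q
    · rw [if_pos hc, if_pos hc]; ring
    · rw [if_neg hc, if_neg hc]; ring
  rw [Finset.sum_congr rfl hj', ← Finset.sum_mul, ← Finset.sum_filter,
    lemF m (p ||| q) (p &&& q) (sub_trans (land_sub_left p q) (sub_lor_left p q))]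
  have hadd := add_eq_lor_add_land p q
  by_cases hm : p + q = m
  · rw [if_pos (by omega), if_pos hm]
    -- sign computation
    have hdp : (p &&& q) ||| p = p := land_sub_left p q
    have hdq : (p &&& q) ||| q = q := land_sub_right p q
    have hdw : (p &&& q) ||| (p ||| q) = p ||| q :=
      sub_trans hdp (sub_lor_left p q)
    have e1 : sgn R p = sgn R (p &&& q) * sgn R (p ^^^ (p &&& q)) := by
      rw [← sgn_disj (sub_decomp hdp).1, (sub_decomp hdp).2]
    have e2 : sgn R q = sgn R (p &&& q) * sgn R (q ^^^ (p &&& q)) := by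
      rw [← sgn_disj (sub_decomp hdq).1, (sub_decomp hdq).2]
    have e3 : sgn R (p ||| q) =
        sgn R (p &&& q) * (sgn R (p ^^^ (p &&& q)) * sgn R (q ^^^ (p &&& q))) := by
      have h1 : sgn R (p ||| q)
          = sgn R (p &&& q) * sgn R ((p ||| q) ^^^ (p &&& q)) := by
        rw [← sgn_disj (sub_decomp hdw).1, (sub_decomp hdw).2]
      have h2 : sgn R ((p ||| q) ^^^ (p &&& q))
          = sgn R (p ^^^ (p &&& q)) * sgn R (q ^^^ (p &&& q)) := by
        rw [← lor_xor_land, sgn_disj (disj_of_land rfl)]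
      rw [h1, h2]
    calc sgn R (p ||| q) * (sgn R (p &&& q) * (sgn R p * sgn R q))
        = (sgn R (p &&& q) * sgn R (p &&& q)) * ((sgn R (p &&& q) * sgn R (p &&& q)) *
            ((sgn R (p ^^^ (p &&& q)) * sgn R (p ^^^ (p &&& q))) *
             (sgn R (q ^^^ (p &&& q)) * sgn R (q ^^^ (p &&& q))))) := by
          rw [e3, e1, e2]; ring
      _ = 1 := by
          rw [sgn_mul_self, sgn_mul_self, sgn_mul_self]
          norm_num
  · rw [if_neg (by omega), if_neg hm, zero_mul]

end Key

section Main
variable {R : Type*} [CommRing R]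

lemma sgn_def (n : ℕ) : ((-1 : R)) ^ ((Nat.digits 2 n).sum) = sgn R n := rfl

lemma ext_sum {j k m : ℕ} (hj : j ≤ m) (f : ℕ → R) :
    (∑ t ∈ Finset.Icc (j - k) j, f t)
      = ∑ t ∈ Finset.range (m + 1), if t ∈ Finset.Icc (j - k) j then f t else 0 := by
  rw [Finset.sum_ite_mem, Finset.inter_eq_right.mpr]
  intro x hx
  rw [Finset.mem_Icc] at hx
  rw [Finset.mem_range]
  omega

lemma mul_sum_sum (x y z : R) (s t : Finset ℕ) (f g : ℕ → R) :
    x * (y * z * (∑ i ∈ s, f i) * (∑ i ∈ t, g i))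
      = ∑ i ∈ s, ∑ i' ∈ t, (f i * g i') * (x * (y * z)) := by
  have h : x * (y * z * (∑ i ∈ s, f i) * (∑ i ∈ t, g i))
      = ((∑ i ∈ s, f i) * (∑ i ∈ t, g i)) * (x * (y * z)) := by ring
  rw [h, Finset.sum_mul_sum, Finset.sum_mul]
  exact Finset.sum_congr rfl fun i _ => Finset.sum_mul _ _ _

end Main

end SierpConv

open Finset

theorem sierpinski_convolution {R : Type*} [CommRing R]
    (a b : PowerSeries R) (m : ℕ) :
    PowerSeries.coeff m (a * b) =
      ∑ k ∈ Finset.range (m + 1),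
        (-1 : R) ^ ((Nat.digits 2 k).sum) *
          ∑ j ∈ Finset.Icc k m,
            (if k &&& ((k + m - j) - k) = 0 then (1 : R) else 0) *
            (if k &&& (j - k) = 0 then (1 : R) else 0) *
            (∑ t ∈ Finset.Icc (j - k) j,
              (if (j - t) &&& (k - (j - t)) = 0 then (1 : R) else 0) *
                (-1 : R) ^ ((Nat.digits 2 t).sum) * PowerSeries.coeff t a) *
            (∑ t ∈ Finset.Icc (j - k) j,
              (if (j - t) &&& (k - (j - t)) = 0 then (1 : R) else 0) *
                (-1 : R) ^ ((Nat.digits 2 t).sum) * PowerSeries.coeff t b) := by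
  classical
  symm
  simp only [SierpConv.sgn_def]
  calc
    (∑ k ∈ Finset.range (m + 1), SierpConv.sgn R k *
      ∑ j ∈ Finset.Icc k m,
        (if k &&& ((k + m - j) - k) = 0 then (1 : R) else 0) *
        (if k &&& (j - k) = 0 then (1 : R) else 0) *
        (∑ t ∈ Finset.Icc (j - k) j,
          (if (j - t) &&& (k - (j - t)) = 0 then (1 : R) else 0) *
            SierpConv.sgn R t * PowerSeries.coeff t a) *
        (∑ t ∈ Finset.Icc (j - k) j,
          (if (j - t) &&& (k - (j - t)) = 0 then (1 : R) else 0) *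
            SierpConv.sgn R t * PowerSeries.coeff t b))
      = ∑ k ∈ Finset.range (m + 1), ∑ j ∈ Finset.Icc k m,
          ∑ t ∈ Finset.range (m + 1), ∑ t' ∈ Finset.range (m + 1),
            ((if t ∈ Finset.Icc (j - k) j then
                (if (j - t) &&& (k - (j - t)) = 0 then (1 : R) else 0) *
                  SierpConv.sgn R t * PowerSeries.coeff t a else 0) *
             (if t' ∈ Finset.Icc (j - k) j then
                (if (j - t') &&& (k - (j - t')) = 0 then (1 : R) else 0) *
                  SierpConv.sgn R t' * PowerSeries.coeff t' b else 0)) *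
            (SierpConv.sgn R k *
              ((if k &&& ((k + m - j) - k) = 0 then (1 : R) else 0) *
               (if k &&& (j - k) = 0 then (1 : R) else 0))) := by
        refine Finset.sum_congr rfl fun k hk => ?_
        rw [Finset.mul_sum]
        refine Finset.sum_congr rfl fun j hj => ?_
        have hjm : j ≤ m := (Finset.mem_Icc.mp hj).2
        rw [SierpConv.ext_sum hjm, SierpConv.ext_sum hjm]
        exact SierpConv.mul_sum_sum _ _ _ _ _ _ _
    _ = ∑ t ∈ Finset.range (m + 1), ∑ t' ∈ Finset.range (m + 1),
          ∑ k ∈ Finset.range (m + 1), ∑ j ∈ Finset.Icc k m,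
            ((if t ∈ Finset.Icc (j - k) j then
                (if (j - t) &&& (k - (j - t)) = 0 then (1 : R) else 0) *
                  SierpConv.sgn R t * PowerSeries.coeff t a else 0) *
             (if t' ∈ Finset.Icc (j - k) j then
                (if (j - t') &&& (k - (j - t')) = 0 then (1 : R) else 0) *
                  SierpConv.sgn R t' * PowerSeries.coeff t' b else 0)) *
            (SierpConv.sgn R k *
              ((if k &&& ((k + m - j) - k) = 0 then (1 : R) else 0) *
               (if k &&& (j - k) = 0 then (1 : R) else 0))) := by
        have hgen : ∀ F : ℕ → ℕ → ℕ → ℕ → R,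
            (∑ k ∈ Finset.range (m + 1), ∑ j ∈ Finset.Icc k m,
              ∑ t ∈ Finset.range (m + 1), ∑ t' ∈ Finset.range (m + 1), F k j t t')
            = ∑ t ∈ Finset.range (m + 1), ∑ t' ∈ Finset.range (m + 1),
                ∑ k ∈ Finset.range (m + 1), ∑ j ∈ Finset.Icc k m, F k j t t' := by
          intro F
          exact Eq.trans
            (Finset.sum_congr rfl fun k _ => Eq.trans Finset.sum_comm
              (Finset.sum_congr rfl fun t _ => Finset.sum_comm))
            (Eq.trans Finset.sum_comm
              (Finset.sum_congr rfl fun t _ => Finset.sum_comm))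
        exact hgen _
    _ = ∑ t ∈ Finset.range (m + 1), ∑ t' ∈ Finset.range (m + 1),
          (if t + t' = m then (1 : R) else 0) *
            (PowerSeries.coeff t a * PowerSeries.coeff t' b) := by
        refine Finset.sum_congr rfl fun t _ => Finset.sum_congr rfl fun t' _ => ?_
        rw [← SierpConv.key m t t', Finset.sum_mul]
        refine Finset.sum_congr rfl fun k _ => ?_
        rw [Finset.sum_mul]
        refine Finset.sum_congr rfl fun j _ => ?_
        split_ifs <;> ring
    _ = PowerSeries.coeff m (a * b) := by
        rw [PowerSeries.coeff_mul, Finset.Nat.sum_antidiagonal_eq_sum_range_succ_mk]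
        refine Finset.sum_congr rfl fun t ht => ?_
        rw [Finset.mem_range] at ht
        have hstep : ∀ t' ∈ Finset.range (m + 1),
            (if t + t' = m then (1 : R) else 0) *
              (PowerSeries.coeff t a * PowerSeries.coeff t' b)
            = if t' = m - t then PowerSeries.coeff t a * PowerSeries.coeff t' b
              else 0 := by
          intro t' _
          by_cases h : t + t' = m
          · rw [if_pos h, if_pos (by omega), one_mul]
          · rw [if_neg h, if_neg (by omega), zero_mul]
        rw [Finset.sum_congr rfl hstep, Finset.sum_ite_eq' (Finset.range (m + 1)) (m - t)
          (fun t' => PowerSeries.coeff t a * PowerSeries.coeff t' b),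
          if_pos (by rw [Finset.mem_range]; omega)]
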